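/- Suppose the quadratic form Q(x) = ⟨x, T x⟩ is a Legendre form, the feasible set F is nonempty, and the only v in the recession cone of F with ⟨v, T v⟩ ≤ 0 is v = 0. Then the solution set of min f over F is nonempty, closed and bounded. -/

import Mathlib

noncomputable section
open Filter Topology RealInnerProductSpace

/-- weak convergence of a sequence in a Hilbert space -/
def WeakConv {H : Type*} [NormedAddCommGroup H] [InnerProductSpace ℝ H]
    (x : ℕ → H) (x₀ : H) : Prop :=
  ∀ y : H, Tendsto (fun k => ⟪x k, y⟫) atTop (𝓝 ⟪x₀, y⟫)

/-- weak lower semicontinuity: lower semicontinuity for the weak topology -/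
def WeaklyLSC {H : Type*} [NormedAddCommGroup H] [InnerProductSpace ℝ H]
    (Q : H → ℝ) : Prop :=
  LowerSemicontinuous fun x : WeakSpace ℝ H => Q ((toWeakSpace ℝ H).symm x)

/-- `Q` is a Legendre form: weakly lsc, and any sequence converging weakly to `x₀`
with `Q (x k) → Q x₀` converges strongly to `x₀`. -/
def IsLegendreForm {H : Type*} [NormedAddCommGroup H] [InnerProductSpace ℝ H]
    (Q : H → ℝ) : Prop :=
  WeaklyLSC Q ∧ ∀ (x : ℕ → H) (x₀ : H), WeakConv x x₀ →
    Tendsto (fun k => Q (x k)) atTop (𝓝 (Q x₀)) → Tendsto x atTop (𝓝 x₀)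

/-- If `⟪x, T x⟫` is a Legendre form, the feasible set `F` is nonempty,
and the only `v` in the recession cone of `F` with `⟪v, T v⟫ ≤ 0` is `v = 0`, then the
solution set of `min f` over `F` is nonempty, closed and bounded. -/
theorem exists_weak_subseq {H : Type*} [NormedAddCommGroup H] [InnerProductSpace ℝ H]
    [CompleteSpace H] (x : ℕ → H) (M : ℝ) (hM : ∀ k, ‖x k‖ ≤ M) :
    ∃ (x₀ : H) (φ : ℕ → ℕ), StrictMono φ ∧ WeakConv (fun k => x (φ k)) x₀ := by
  have hM0 : 0 ≤ M := le_trans (norm_nonneg (x 0)) (hM 0)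
  set K : Submodule ℝ H := (Submodule.span ℝ (Set.range x)).topologicalClosure with hK
  have hxK : ∀ k, x k ∈ K := fun k =>
    Submodule.le_topologicalClosure _ (Submodule.subset_span ⟨k, rfl⟩)
  -- countable dense subset of K
  have hsep : TopologicalSpace.IsSeparable (K : Set H) := by
    have h1 : TopologicalSpace.IsSeparable (Set.range x) :=
      (Set.countable_range x).isSeparable
    have h2 := (h1.span (R := ℝ)).closure
    simpa [hK, Submodule.topologicalClosure_coe] using h2
  obtain ⟨D, hDc, hDsub⟩ := hsep
  obtain ⟨d, hd⟩ : ∃ d : ℕ → H, insert (0 : H) D = Set.range d :=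
    ((hDc.insert 0).exists_eq_range (Set.insert_nonempty _ _))
  have hKd : (K : Set H) ⊆ closure (Set.range d) := by
    refine hDsub.trans (closure_mono ?_)
    rw [← hd]; exact Set.subset_insert _ _
  -- diagonal subsequence via compactness of products
  set f : ℕ → (ℕ → ℝ) := fun k n => ⟪x k, d n⟫ with hf
  have hmem : ∀ k, f k ∈ Set.univ.pi fun n => Set.Icc (-(M * ‖d n‖)) (M * ‖d n‖) := by
    intro k n _
    have := abs_real_inner_le_norm (x k) (d n)
    have h2 : ‖x k‖ * ‖d n‖ ≤ M * ‖d n‖ :=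
      mul_le_mul_of_nonneg_right (hM k) (norm_nonneg _)
    constructor <;> [linarith [abs_le.1 (this.trans h2) |>.1]; exact (le_abs_self _).trans (this.trans h2)]
  obtain ⟨g, -, φ, hφ, hconv⟩ :=
    (isCompact_univ_pi fun n => isCompact_Icc).tendsto_subseq hmem
  have hpt : ∀ n, Tendsto (fun k => ⟪x (φ k), d n⟫) atTop (𝓝 (g n)) := by
    intro n
    exact (tendsto_pi_nhds.1 hconv) n
  -- Cauchy for all y
  have hcauchy : ∀ y : H, CauchySeq fun k => (⟪x (φ k), y⟫ : ℝ) := by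
    have main : ∀ y ∈ closure (Set.range d), CauchySeq fun k => (⟪x (φ k), y⟫ : ℝ) := by
      intro y hy
      rw [Metric.cauchySeq_iff]
      intro ε hε
      have hε3 : 0 < ε / 3 / (M + 1) := by positivity
      obtain ⟨z, ⟨n, rfl⟩, hz⟩ := Metric.mem_closure_iff.1 hy _ hε3
      have hC : CauchySeq fun k => (⟪x (φ k), d n⟫ : ℝ) := (hpt n).cauchySeq
      obtain ⟨N, hN⟩ := Metric.cauchySeq_iff.1 hC (ε/3) (by positivity)
      refine ⟨N, fun a ha b hb => ?_⟩
      have key : ∀ j, |(⟪x (φ j), y⟫ : ℝ) - ⟪x (φ j), d n⟫| ≤ ε/3 := by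
        intro j
        rw [← inner_sub_right]
        refine (abs_real_inner_le_norm _ _).trans ?_
        have h1 : ‖y - d n‖ ≤ ε / 3 / (M + 1) := by
          rw [← dist_eq_norm]; exact le_of_lt hz
        calc ‖x (φ j)‖ * ‖y - d n‖ ≤ M * (ε / 3 / (M + 1)) := by
              apply mul_le_mul (hM _) h1 (norm_nonneg _) hM0
          _ = ε / 3 * (M / (M + 1)) := by ring
          _ ≤ ε / 3 * 1 := by
              apply mul_le_mul_of_nonneg_left _ (by positivity)
              rw [div_le_one (by linarith)]; linarith
          _ = ε / 3 := mul_one _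
      have hmid := hN a ha b hb
      rw [Real.dist_eq] at hmid ⊢
      have k1 := key a; have k2 := key b
      have t1 := abs_sub_le (⟪x (φ a), y⟫ : ℝ) (⟪x (φ a), d n⟫ : ℝ) (⟪x (φ b), y⟫ : ℝ)
      have t2 := abs_sub_le (⟪x (φ a), d n⟫ : ℝ) (⟪x (φ b), d n⟫ : ℝ) (⟪x (φ b), y⟫ : ℝ)
      have k2' : |(⟪x (φ b), d n⟫ : ℝ) - ⟪x (φ b), y⟫| ≤ ε/3 := by
        rw [abs_sub_comm]; exact k2
      linarith
    -- general y via orthogonal projection onto K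
    intro y
    have hc : (↑(K.orthogonalProjectionOnto y) : H) ∈ (K : Set H) := (K.orthogonalProjectionOnto y).2
    have heq : ∀ k, (⟪x (φ k), y⟫ : ℝ) = ⟪x (φ k), (K.orthogonalProjectionOnto y : H)⟫ := by
      intro k
      have horth : y - K.orthogonalProjectionOnto y ∈ Kᗮ := Submodule.sub_starProjection_mem_orthogonal (K := K) y
      have h0 : (⟪x (φ k), y - K.orthogonalProjectionOnto y⟫ : ℝ) = 0 :=
        horth (x (φ k)) (hxK _)
      rw [inner_sub_right] at h0
      linarith
    simp only [heq]
    exact main _ (hKd hc)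
  -- limits define a bounded linear functional
  have hlim : ∀ y : H, ∃ l : ℝ, Tendsto (fun k => (⟪x (φ k), y⟫ : ℝ)) atTop (𝓝 l) :=
    fun y => cauchySeq_tendsto_of_complete (hcauchy y)
  choose L hL using hlim
  have hadd : ∀ y z : H, L (y + z) = L y + L z := by
    intro y z
    refine tendsto_nhds_unique (hL (y + z)) ?_
    have := (hL y).add (hL z)
    simpa [inner_add_right] using this
  have hsmul : ∀ (r : ℝ) (y : H), L (r • y) = r * L y := by
    intro r y
    refine tendsto_nhds_unique (hL (r • y)) ?_
    have := (hL y).const_mul r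
    simpa [real_inner_smul_right] using this
  have hbound : ∀ y : H, ‖L y‖ ≤ M * ‖y‖ := by
    intro y
    rw [Real.norm_eq_abs]
    have h1 : Tendsto (fun k => |(⟪x (φ k), y⟫ : ℝ)|) atTop (𝓝 |L y|) := (hL y).abs
    refine le_of_tendsto h1 (Eventually.of_forall fun k => ?_)
    exact (abs_real_inner_le_norm _ _).trans
      (mul_le_mul_of_nonneg_right (hM _) (norm_nonneg _))
  set Ldual : H →L[ℝ] ℝ :=
    LinearMap.mkContinuous
      { toFun := L, map_add' := hadd, map_smul' := hsmul } M hbound with hLd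
  refine ⟨(InnerProductSpace.toDual ℝ H).symm Ldual, φ, hφ, fun y => ?_⟩
  have h2 : (⟪(InnerProductSpace.toDual ℝ H).symm Ldual, y⟫ : ℝ) = Ldual y :=
    InnerProductSpace.toDual_symm_apply
  rw [h2]
  exact hL y

theorem WeakConv.tendsto_weakSpace {H : Type*} [NormedAddCommGroup H] [InnerProductSpace ℝ H]
    [CompleteSpace H] {x : ℕ → H} {x₀ : H} (h : WeakConv x x₀) :
    Tendsto (fun k => toWeakSpace ℝ H (x k)) atTop (𝓝 (toWeakSpace ℝ H x₀)) := by
  have hinj : Function.Injective ⇑((topDualPairing ℝ H).flip) := by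
    intro a b hab
    have h1 := congrArg (fun L => L (InnerProductSpace.toDual ℝ H (a - b))) hab
    simp only [LinearMap.flip_apply, topDualPairing_apply, InnerProductSpace.toDual_apply_apply] at h1
    have : (⟪a - b, a - b⟫ : ℝ) = 0 := by
      rw [inner_sub_right] at *
      linarith
    exact sub_eq_zero.1 (inner_self_eq_zero.1 this)
  refine (WeakBilin.tendsto_iff_forall_eval_tendsto ((topDualPairing ℝ H).flip) hinj).2 ?_
  intro l
  have h2 := h ((InnerProductSpace.toDual ℝ H).symm l)
  show Tendsto (fun k => l (x k)) atTop (𝓝 (l x₀))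
  have h3 : ∀ z : H, (⟪z, (InnerProductSpace.toDual ℝ H).symm l⟫ : ℝ) = l z := fun z =>
    (real_inner_comm _ _).trans InnerProductSpace.toDual_symm_apply
  simpa only [h3] using h2

theorem WeaklyLSC.eventually_lt {H : Type*} [NormedAddCommGroup H] [InnerProductSpace ℝ H]
    [CompleteSpace H] {Q : H → ℝ} (hQ : WeaklyLSC Q) {x : ℕ → H} {x₀ : H}
    (h : WeakConv x x₀) {t : ℝ} (ht : t < Q x₀) : ∀ᶠ k in atTop, t < Q (x k) := by
  have h1 := hQ (toWeakSpace ℝ H x₀) t ht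
  exact h.tendsto_weakSpace.eventually h1

/-- a psd self-adjoint operator with zero quadratic value has the vector in kernel -/
theorem psd_kernel {H : Type*} [NormedAddCommGroup H] [InnerProductSpace ℝ H]
    (S : H →L[ℝ] H) (hsa : ∀ x y : H, ⟪S x, y⟫ = ⟪x, S y⟫) (hpsd : ∀ x : H, 0 ≤ ⟪x, S x⟫)
    {v : H} (h0 : (⟪v, S v⟫ : ℝ) = 0) : S v = 0 := by
  have key : ∀ t : ℝ, 0 ≤ ⟪S v, S (S v)⟫ + 2 * t * ‖S v‖ ^ 2 := by
    intro t
    have h1 := hpsd (S v + t • v)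
    have e1 : (⟪S v + t • v, S (S v + t • v)⟫ : ℝ)
        = ⟪S v, S (S v)⟫ + 2 * t * ‖S v‖ ^ 2 := by
      rw [map_add, map_smul, inner_add_left, inner_add_right, inner_add_right,
        real_inner_smul_left, real_inner_smul_left, real_inner_smul_right,
        real_inner_smul_right]
      have e2 : (⟪v, S (S v)⟫ : ℝ) = ‖S v‖ ^ 2 := by
        rw [← hsa v (S v), real_inner_self_eq_norm_sq]
      have e3 : (⟪S v, S v⟫ : ℝ) = ‖S v‖ ^ 2 := real_inner_self_eq_norm_sq _
      rw [e2, e3, h0]; ring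
    rw [e1] at h1; exact h1
  by_contra hne
  have hpos : 0 < ‖S v‖ ^ 2 := by
    have := norm_pos_iff.mpr hne
    positivity
  have hkey := key (-(⟪S v, S (S v)⟫ + 1) / (2 * ‖S v‖ ^ 2))
  have h2 : 2 * (-(⟪S v, S (S v)⟫ + 1) / (2 * ‖S v‖ ^ 2)) * ‖S v‖ ^ 2
      = -((⟪S v, S (S v)⟫ : ℝ) + 1) := by
    field_simp
  rw [h2] at hkey
  linarith

/-- weak lower semicontinuity of psd quadratic forms, sequential version -/
theorem psd_weak_lsc {H : Type*} [NormedAddCommGroup H] [InnerProductSpace ℝ H]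
    (S : H →L[ℝ] H) (hsa : ∀ x y : H, ⟪S x, y⟫ = ⟪x, S y⟫) (hpsd : ∀ x : H, 0 ≤ ⟪x, S x⟫)
    {x : ℕ → H} {x₀ : H} (h : WeakConv x x₀) {ε : ℝ} (hε : 0 < ε) :
    ∀ᶠ k in atTop, (⟪x₀, S x₀⟫ : ℝ) - ε ≤ ⟪x k, S (x k)⟫ := by
  have h1 : Tendsto (fun k => (⟪x k, S x₀⟫ : ℝ)) atTop (𝓝 ⟪x₀, S x₀⟫) := h (S x₀)
  have h2 : ∀ᶠ k in atTop, (⟪x₀, S x₀⟫ : ℝ) - ε / 2 < ⟪x k, S x₀⟫ :=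
    h1.eventually (eventually_gt_nhds (by linarith))
  filter_upwards [h2] with k hk
  have h3 := hpsd (x k - x₀)
  have e1 : (⟪x k - x₀, S (x k - x₀)⟫ : ℝ)
      = ⟪x k, S (x k)⟫ - 2 * ⟪x k, S x₀⟫ + ⟪x₀, S x₀⟫ := by
    rw [map_sub, inner_sub_left, inner_sub_right, inner_sub_right]
    have : (⟪x₀, S (x k)⟫ : ℝ) = ⟪x k, S x₀⟫ := by
      rw [← hsa x₀ (x k), real_inner_comm]
    rw [this]; ring
  rw [e1] at h3
  linarith


theorem sublevel_bounded {H : Type*} [NormedAddCommGroup H] [InnerProductSpace ℝ H]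
    [CompleteSpace H] {m : ℕ} (T : H →L[ℝ] H) (c : H)
    (Ts : Fin m → H →L[ℝ] H) (cs : Fin m → H) (αs : Fin m → ℝ)
    (hsa : ∀ i, ∀ x y : H, ⟪Ts i x, y⟫ = ⟪x, Ts i y⟫)
    (hpsd : ∀ i, ∀ x : H, 0 ≤ ⟪x, Ts i x⟫)
    (hLeg : IsLegendreForm (fun x : H => ⟪x, T x⟫))
    (hQPR : ∀ v : H, (∀ i, Ts i v = 0 ∧ ⟪cs i, v⟫ ≤ 0) → ⟪v, T v⟫ ≤ 0 → v = 0)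
    (C : ℝ) :
    ∃ R : ℝ, ∀ z : H, (∀ i, (1 / 2) * ⟪z, Ts i z⟫ + ⟪cs i, z⟫ + αs i ≤ 0) →
      (1 / 2) * ⟪z, T z⟫ + ⟪c, z⟫ ≤ C → ‖z‖ ≤ R := by
  by_contra hcon
  push_neg at hcon
  choose y hy1 hy2 hy3 using fun n : ℕ => hcon (n : ℝ)
  set r : ℕ → ℝ := fun n => ‖y n‖ with hrdef
  have hrpos : ∀ n, 0 < r n := fun n => lt_of_le_of_lt (Nat.cast_nonneg n) (hy3 n)
  set v : ℕ → H := fun n => (r n)⁻¹ • y n with hvdef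
  have hvnorm : ∀ n, ‖v n‖ = 1 := by
    intro n
    rw [hvdef]
    simp only [norm_smul, norm_inv, Real.norm_eq_abs, abs_of_pos (hrpos n)]
    exact inv_mul_cancel₀ (hrpos n).ne'
  obtain ⟨v₀, φ, hφ, hw⟩ := exists_weak_subseq v 1 (fun n => (hvnorm n).le)
  set w : ℕ → H := fun k => v (φ k) with hwdef
  set s : ℕ → ℝ := fun k => r (φ k) with hsdef
  have hspos : ∀ k, 0 < s k := fun k => hrpos (φ k)
  have hs : Tendsto s atTop atTop := by
    apply tendsto_atTop_mono (fun k => ?_) tendsto_natCast_atTop_atTop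
    calc ((k : ℝ)) ≤ (φ k : ℝ) := Nat.cast_le.2 hφ.le_apply
      _ ≤ s k := (hy3 (φ k)).le
  have hinv : Tendsto (fun k => (s k)⁻¹) atTop (𝓝 0) := tendsto_inv_atTop_zero.comp hs
  -- quadratic rescaling identity
  have hq : ∀ (S : H →L[ℝ] H) (n : ℕ),
      (⟪v n, S (v n)⟫ : ℝ) = (r n)⁻¹ * (r n)⁻¹ * ⟪y n, S (y n)⟫ := by
    intro S n
    rw [hvdef]
    simp only [map_smul, real_inner_smul_left, real_inner_smul_right]
    ring
  -- generic upper bound for quadratic forms along the subsequence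
  have hub : ∀ (S : H →L[ℝ] H) (a b : ℝ), (∀ n, (⟪y n, S (y n)⟫ : ℝ) ≤ 2 * (a * r n + b)) →
      ∃ u : ℕ → ℝ, Tendsto u atTop (𝓝 0) ∧ ∀ k, (⟪w k, S (w k)⟫ : ℝ) ≤ u k := by
    intro S a b hby
    refine ⟨fun k => (s k)⁻¹ * (2 * a) + (s k)⁻¹ * (s k)⁻¹ * (2 * b), ?_, ?_⟩
    · have := (hinv.mul_const (2 * a)).add ((hinv.mul hinv).mul_const (2 * b))
      simpa using this
    · intro k
      have hrk := hspos k
      have h1 := hby (φ k)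
      have h3 : (s k)⁻¹ * (s k)⁻¹ * (2 * (a * s k + b))
          = (s k)⁻¹ * (2 * a) + (s k)⁻¹ * (s k)⁻¹ * (2 * b) := by
        field_simp
      calc (⟪w k, S (w k)⟫ : ℝ) = (s k)⁻¹ * (s k)⁻¹ * ⟪y (φ k), S (y (φ k))⟫ := hq S (φ k)
        _ ≤ (s k)⁻¹ * (s k)⁻¹ * (2 * (a * s k + b)) := by
            apply mul_le_mul_of_nonneg_left h1 (by positivity)
        _ = _ := h3
  -- the limit is in the recession cone
  have hrec : ∀ i, Ts i v₀ = 0 ∧ (⟪cs i, v₀⟫ : ℝ) ≤ 0 := by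
    intro i
    obtain ⟨u, hu0, hule⟩ := hub (Ts i) ‖cs i‖ |αs i| (fun n => by
      have h1 := hy1 n i
      have h2 := (abs_le.1 (abs_real_inner_le_norm (cs i) (y n))).1
      have h3 := neg_abs_le (αs i)
      rw [hrdef]
      nlinarith [norm_nonneg (y n)])
    have hq0 : (⟪v₀, Ts i v₀⟫ : ℝ) ≤ 0 := by
      by_contra hlt
      push_neg at hlt
      have E1 := psd_weak_lsc (Ts i) (hsa i) (hpsd i) hw (ε := ⟪v₀, Ts i v₀⟫ / 4)
        (by linarith)
      have E2 : ∀ᶠ k in atTop, u k < ⟪v₀, Ts i v₀⟫ / 2 :=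
        hu0.eventually (eventually_lt_nhds (by linarith))
      obtain ⟨k, hk1, hk2⟩ := (E1.and E2).exists
      have := hule k
      linarith
    have hq0' : (⟪v₀, Ts i v₀⟫ : ℝ) = 0 := le_antisymm hq0 (hpsd i v₀)
    refine ⟨psd_kernel (Ts i) (hsa i) (hpsd i) hq0', ?_⟩
    have hcb : ∀ n, (⟪cs i, v n⟫ : ℝ) ≤ (r n)⁻¹ * |αs i| := by
      intro n
      have h1 := hy1 n i
      have h2 := hpsd i (y n)
      have h3 : (⟪cs i, y n⟫ : ℝ) ≤ |αs i| := by
        have := neg_abs_le (αs i); linarith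
      have h4 : (⟪cs i, v n⟫ : ℝ) = (r n)⁻¹ * ⟪cs i, y n⟫ := by
        rw [hvdef]; simp [real_inner_smul_right]
      rw [h4]
      exact mul_le_mul_of_nonneg_left h3 (inv_nonneg.2 (hrpos n).le)
    have hlim : Tendsto (fun k => (⟪cs i, w k⟫ : ℝ)) atTop (𝓝 ⟪cs i, v₀⟫) := by
      have := hw (cs i)
      simpa [real_inner_comm] using this
    have hulim : Tendsto (fun k => (s k)⁻¹ * |αs i|) atTop (𝓝 0) := by
      simpa using hinv.mul_const |αs i|
    exact le_of_tendsto_of_tendsto hlim hulim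
      (Eventually.of_forall fun k => hcb (φ k))
  -- the Legendre form is nonpositive at the limit
  obtain ⟨u, hu0, hule⟩ := hub T ‖c‖ |C| (fun n => by
    have h1 := hy2 n
    have h2 := (abs_le.1 (abs_real_inner_le_norm c (y n))).1
    have h3 := le_abs_self C
    rw [hrdef]
    nlinarith [norm_nonneg (y n)])
  have hT0 : (⟪v₀, T v₀⟫ : ℝ) ≤ 0 := by
    by_contra hlt
    push_neg at hlt
    have E1 : ∀ᶠ k in atTop, (⟪v₀, T v₀⟫ : ℝ) / 2 < ⟪w k, T (w k)⟫ :=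
      WeaklyLSC.eventually_lt hLeg.1 hw (by linarith)
    have E2 : ∀ᶠ k in atTop, u k < ⟪v₀, T v₀⟫ / 2 :=
      hu0.eventually (eventually_lt_nhds (by linarith))
    obtain ⟨k, hk1, hk2⟩ := (E1.and E2).exists
    have := hule k
    linarith
  have hv0 : v₀ = 0 := hQPR v₀ hrec hT0
  -- the quadratic form converges to 0 = Q v₀ along the subsequence
  have hQv0 : (⟪v₀, T v₀⟫ : ℝ) = 0 := by rw [hv0]; simp
  have hQconv : Tendsto (fun k => (⟪w k, T (w k)⟫ : ℝ)) atTop (𝓝 ⟪v₀, T v₀⟫) := by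
    rw [hQv0]
    rw [tendsto_order]
    constructor
    · intro t ht
      exact WeaklyLSC.eventually_lt hLeg.1 hw (by rw [hQv0]; exact ht)
    · intro t ht
      have E2 : ∀ᶠ k in atTop, u k < t := hu0.eventually (eventually_lt_nhds ht)
      filter_upwards [E2] with k hk using lt_of_le_of_lt (hule k) hk
  have hstrong : Tendsto w atTop (𝓝 v₀) := hLeg.2 w v₀ hw hQconv
  have hnorm : Tendsto (fun k => ‖w k‖) atTop (𝓝 0) := by
    rw [hv0] at hstrong
    simpa using hstrong.norm
  have hone : Tendsto (fun k => ‖w k‖) atTop (𝓝 1) := by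
    have : (fun k => ‖w k‖) = fun _ => (1 : ℝ) := funext fun k => hvnorm (φ k)
    rw [this]
    exact tendsto_const_nhds
  exact one_ne_zero (tendsto_nhds_unique hone hnorm)

theorem stmt5 {H : Type*} [NormedAddCommGroup H] [InnerProductSpace ℝ H] [CompleteSpace H]
    {m : ℕ} (T : H →L[ℝ] H) (c : H)
    (Ts : Fin m → H →L[ℝ] H) (cs : Fin m → H) (αs : Fin m → ℝ)
    (hTsa : ∀ x y : H, ⟪T x, y⟫ = ⟪x, T y⟫)
    (hsa : ∀ i, ∀ x y : H, ⟪Ts i x, y⟫ = ⟪x, Ts i y⟫)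
    (hpsd : ∀ i, ∀ x : H, 0 ≤ ⟪x, Ts i x⟫)
    (hLeg : IsLegendreForm (fun x : H => ⟪x, T x⟫))
    (f : H → ℝ) (hf : f = fun x => (1 / 2) * ⟪x, T x⟫ + ⟪c, x⟫)
    (F : Set H)
    (hF : F = {x : H | ∀ i, (1 / 2) * ⟪x, Ts i x⟫ + ⟪cs i, x⟫ + αs i ≤ 0})
    (hne : F.Nonempty)
    (hQPR : ∀ v : H, (∀ i, Ts i v = 0 ∧ ⟪cs i, v⟫ ≤ 0) → ⟪v, T v⟫ ≤ 0 → v = 0)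
    (Sol : Set H) (hSol : Sol = {x ∈ F | ∀ y ∈ F, f x ≤ f y}) :
    Sol.Nonempty ∧ IsClosed Sol ∧ Bornology.IsBounded Sol := by
  subst hf hF hSol
  obtain ⟨xb, hxb⟩ := hne
  set f : H → ℝ := fun x => (1 / 2) * ⟪x, T x⟫ + ⟪c, x⟫ with hfdef
  have hfc : Continuous f :=
    (continuous_const.mul (continuous_id.inner T.continuous)).add
      (continuous_const.inner continuous_id)
  set F : Set H := {x : H | ∀ i, (1 / 2) * ⟪x, Ts i x⟫ + ⟪cs i, x⟫ + αs i ≤ 0} with hFdef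
  have hFc : IsClosed F := by
    have : F = ⋂ i, {x : H | (1 / 2) * ⟪x, Ts i x⟫ + ⟪cs i, x⟫ + αs i ≤ 0} := by
      ext z; simp [hFdef, Set.mem_iInter]
    rw [this]
    refine isClosed_iInter fun i => isClosed_le ?_ continuous_const
    exact (continuous_const.mul (continuous_id.inner (Ts i).continuous)).add
      (continuous_const.inner continuous_id) |>.add continuous_const
  obtain ⟨R, hR⟩ := sublevel_bounded T c Ts cs αs hsa hpsd hLeg hQPR (f xb)
  have hR' : ∀ z, z ∈ F → f z ≤ f xb → ‖z‖ ≤ R := fun z hz hfz => hR z hz hfz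
  have hR0 : 0 ≤ R := le_trans (norm_nonneg xb) (hR' xb hxb le_rfl)
  -- lower bound for f on the ball of radius R
  have hlb : ∀ z : H, ‖z‖ ≤ R → -(‖T‖ * R ^ 2 / 2 + ‖c‖ * R) ≤ f z := by
    intro z hz
    have h1 : |(⟪z, T z⟫ : ℝ)| ≤ ‖T‖ * R ^ 2 := by
      refine (abs_real_inner_le_norm z (T z)).trans ?_
      have h2 : ‖T z‖ ≤ ‖T‖ * ‖z‖ := T.le_opNorm z
      nlinarith [mul_le_mul_of_nonneg_left h2 (norm_nonneg z),
        mul_le_mul_of_nonneg_left (mul_le_mul hz hz (norm_nonneg z) hR0) T.opNorm_nonneg,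
        norm_nonneg z, norm_nonneg (T z), T.opNorm_nonneg]
    have h3 : |(⟪c, z⟫ : ℝ)| ≤ ‖c‖ * R := by
      refine (abs_real_inner_le_norm c z).trans ?_
      exact mul_le_mul_of_nonneg_left hz (norm_nonneg c)
    have := (abs_le.1 h1).1
    have := (abs_le.1 h3).1
    simp only [hfdef]
    linarith
  set F2 : Set H := {z ∈ F | f z ≤ f xb} with hF2def
  have hF2R : ∀ z ∈ F2, ‖z‖ ≤ R := fun z hz => hR' z hz.1 hz.2
  have hbdd : BddBelow (f '' F2) := by
    refine ⟨-(‖T‖ * R ^ 2 / 2 + ‖c‖ * R), ?_⟩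
    rintro - ⟨z, hz, rfl⟩
    exact hlb z (hF2R z hz)
  have hne2 : (f '' F2).Nonempty := ⟨f xb, xb, ⟨hxb, le_rfl⟩, rfl⟩
  set μ : ℝ := sInf (f '' F2) with hμdef
  have hμle : ∀ z ∈ F2, μ ≤ f z := fun z hz => csInf_le hbdd ⟨z, hz, rfl⟩
  have hseq : ∀ j : ℕ, ∃ z, z ∈ F2 ∧ f z < μ + 1 / (j + 1) := by
    intro j
    obtain ⟨a, ⟨z, hz, rfl⟩, ha⟩ := Real.lt_sInf_add_pos hne2
      (show (0:ℝ) < 1 / (j + 1) by positivity)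
    exact ⟨z, hz, ha⟩
  choose x hx1 hx2 using hseq
  have htend : Tendsto (fun j => f (x j)) atTop (𝓝 μ) := by
    refine tendsto_of_tendsto_of_tendsto_of_le_of_le tendsto_const_nhds ?_
      (fun j => hμle _ (hx1 j)) (fun j => (hx2 j).le)
    simpa using tendsto_const_nhds.add (tendsto_one_div_add_atTop_nhds_zero_nat (𝕜 := ℝ))
  obtain ⟨x₀, φ, hφ, hw⟩ := exists_weak_subseq x R (fun j => hF2R _ (hx1 j))
  set w : ℕ → H := fun k => x (φ k) with hwdef
  have hfw : Tendsto (fun k => f (w k)) atTop (𝓝 μ) := htend.comp hφ.tendsto_atTop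
  -- x₀ is feasible
  have hx₀F : x₀ ∈ F := by
    intro i
    have key : ∀ ε : ℝ, 0 < ε → (1 / 2) * ⟪x₀, Ts i x₀⟫ + ⟪cs i, x₀⟫ + αs i ≤ 2 * ε := by
      intro ε hε
      have E1 := psd_weak_lsc (Ts i) (hsa i) (hpsd i) hw hε
      have hlim : Tendsto (fun k => (⟪cs i, w k⟫ : ℝ)) atTop (𝓝 ⟪cs i, x₀⟫) := by
        have := hw (cs i)
        simpa [real_inner_comm] using this
      have E2 : ∀ᶠ k in atTop, (⟪cs i, x₀⟫ : ℝ) - ε < ⟪cs i, w k⟫ :=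
        hlim.eventually (eventually_gt_nhds (by linarith))
      obtain ⟨k, hk1, hk2⟩ := (E1.and E2).exists
      have hcon := (hx1 (φ k)).1 i
      linarith
    by_contra hlt
    push_neg at hlt
    have := key (((1 / 2) * ⟪x₀, Ts i x₀⟫ + ⟪cs i, x₀⟫ + αs i) / 4) (by linarith)
    linarith
  -- x₀ attains value at most μ
  have hlc : Tendsto (fun k => (⟪c, w k⟫ : ℝ)) atTop (𝓝 ⟪c, x₀⟫) := by
    have := hw c
    simpa [real_inner_comm] using this
  have hQw : Tendsto (fun k => (⟪w k, T (w k)⟫ : ℝ)) atTop (𝓝 (2 * (μ - ⟪c, x₀⟫))) := by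
    have hident : ∀ z : H, (⟪z, T z⟫ : ℝ) = 2 * (f z - ⟪c, z⟫) := by
      intro z; simp only [hfdef]; ring
    simp only [hident]
    exact (hfw.sub hlc).const_mul 2
  have hQx₀ : (⟪x₀, T x₀⟫ : ℝ) ≤ 2 * (μ - ⟪c, x₀⟫) := by
    by_contra hlt
    push_neg at hlt
    have E1 := WeaklyLSC.eventually_lt hLeg.1 hw
      (t := (2 * (μ - ⟪c, x₀⟫) + ⟪x₀, T x₀⟫) / 2) (by linarith)
    have E2 : ∀ᶠ k in atTop,
        (⟪w k, T (w k)⟫ : ℝ) < (2 * (μ - ⟪c, x₀⟫) + ⟪x₀, T x₀⟫) / 2 :=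
      hQw.eventually (eventually_lt_nhds (by linarith))
    obtain ⟨k, hk1, hk2⟩ := (E1.and E2).exists
    linarith
  have hfx₀ : f x₀ ≤ μ := by
    simp only [hfdef]
    linarith
  have hμxb : μ ≤ f xb := hμle xb ⟨hxb, le_rfl⟩
  have hx₀Sol : x₀ ∈ {x ∈ F | ∀ y ∈ F, f x ≤ f y} := by
    refine ⟨hx₀F, fun y hy => ?_⟩
    rcases le_or_gt (f y) (f xb) with h | h
    · exact hfx₀.trans (hμle y ⟨hy, h⟩)
    · exact hfx₀.trans (hμxb.trans h.le)
  refine ⟨⟨x₀, hx₀Sol⟩, ?_, ?_⟩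
  · have hSolEq : {x ∈ F | ∀ y ∈ F, f x ≤ f y}
        = F ∩ ⋂ y ∈ F, {z : H | f z ≤ f y} := by
      ext z
      simp only [Set.mem_setOf_eq, Set.mem_inter_iff, Set.mem_iInter]
    rw [hSolEq]
    exact hFc.inter (isClosed_biInter fun y _ => isClosed_le hfc continuous_const)
  · refine (Metric.isBounded_closedBall (x := (0 : H)) (r := R)).subset ?_
    rintro z ⟨hzF, hz⟩
    rw [Metric.mem_closedBall, dist_zero_right]
    exact hR' z hzF (hz xb hxb)
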